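/- Let L be a regular language over a finite alphabet Σ. Then the language L^# — the set of words u that admit exactly one factorization into a concatenation of factors from L, i.e., there is exactly one list (u_1, …, u_k) of words with every u_i ∈ L and u = u_1 ++ ⋯ ++ u_k — is a regular language. -/

import Mathlib

open scoped Classical

namespace UDS
variable {α : Type} {Q : Type} (M : DFA α Q)

/-- One step on a configuration: extend the current partial factor by `a`,
and possibly close it if it lands in the language. -/
noncomputable def cstep (a : α) (x : List (List α) × List α) :
    List (List (List α) × List α) :=
  if M.eval (x.2 ++ [a]) ∈ M.accept then
    [(x.1, x.2 ++ [a]), (x.1 ++ [x.2 ++ [a]], ([] : List α))]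
  else [(x.1, x.2 ++ [a])]

noncomputable def configs (u : List α) : List (List (List α) × List α) :=
  u.foldl (fun cs a => cs.flatMap (cstep M a)) [([], [])]

@[simp] lemma configs_nil : configs M [] = [([], [])] := rfl

lemma configs_append (u : List α) (a : α) :
    configs M (u ++ [a]) = (configs M u).flatMap (cstep M a) := by
  simp [configs, List.foldl_append]

lemma mem_cstep {a : α} {x y : List (List α) × List α} :
    y ∈ cstep M a x ↔ y = (x.1, x.2 ++ [a]) ∨
      (M.eval (x.2 ++ [a]) ∈ M.accept ∧ y = (x.1 ++ [x.2 ++ [a]], ([] : List α))) := by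
  unfold cstep
  simp only [DFA.eval_append_singleton]
  split_ifs with h <;> simp [h]

lemma mem_configs (hε : M.start ∉ M.accept) (u : List α) (x : List (List α) × List α) :
    x ∈ configs M u ↔ (∀ v ∈ x.1, M.eval v ∈ M.accept) ∧ x.1.flatten ++ x.2 = u := by
  induction u using List.reverseRecOn generalizing x with
  | nil =>
    simp only [configs_nil, List.mem_singleton]
    constructor
    · rintro rfl; simp
    · rintro ⟨h1, h2⟩
      obtain ⟨l, w⟩ := x
      simp only at h1 h2 ⊢
      rcases List.append_eq_nil_iff.mp h2 with ⟨hl, hw⟩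
      have : l = [] := by
        rcases l with _ | ⟨v, t⟩
        · rfl
        · exfalso
          have hv : v = [] := by
            have := List.flatten_eq_nil_iff.mp hl
            exact this v (by simp)
          have := h1 v (by simp)
          rw [hv] at this
          exact hε this
      simp [this, hw]
  | append_singleton u a ih =>
    rw [configs_append, List.mem_flatMap]
    constructor
    · rintro ⟨y, hy, hxy⟩
      obtain ⟨hyL, hyflat⟩ := (ih y).mp hy
      rcases (mem_cstep M).mp hxy with rfl | ⟨hacc, rfl⟩
      · refine ⟨hyL, ?_⟩
        simp only
        rw [← List.append_assoc, hyflat]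
      · constructor
        · intro v hv
          rcases List.mem_append.mp hv with h | h
          · exact hyL v h
          · simp only [List.mem_singleton] at h; subst h; exact hacc
        · simp only [List.flatten_append, List.flatten_cons, List.flatten_nil,
            List.append_nil]
          rw [← List.append_assoc, hyflat]
    · rintro ⟨hL, hflat⟩
      obtain ⟨l, w⟩ := x
      simp only at hL hflat
      rcases w.eq_nil_or_concat with rfl | ⟨w', a', rfl⟩
      · -- closed config
        rw [List.append_nil] at hflat
        rcases l.eq_nil_or_concat with rfl | ⟨l', v, rfl⟩
        · exfalso; simp at hflat
        · have hv : M.eval v ∈ M.accept := hL v (by simp)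
          rcases v.eq_nil_or_concat with rfl | ⟨v', a'', rfl⟩
          · exact absurd hv hε
          · simp only [List.concat_eq_append] at hv hL hflat ⊢
            have h1 : (l'.flatten ++ v') ++ [a''] = u ++ [a] := by
              simpa [List.append_assoc] using hflat
            obtain ⟨h2, h3⟩ := List.append_inj' h1 rfl
            have ha : a'' = a := by simpa using h3
            subst ha
            refine ⟨(l', v'), (ih _).mpr ⟨fun v hv => hL v (by simp [hv]), h2⟩, ?_⟩
            rw [mem_cstep]
            right
            refine ⟨by simpa using hv, by simp [List.concat_eq_append]⟩
      · -- open config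
        have h1 : (l.flatten ++ w') ++ [a'] = u ++ [a] := by
          simpa [List.append_assoc] using hflat
        obtain ⟨h2, h3⟩ := List.append_inj' h1 rfl
        have ha : a' = a := by simpa using h3
        subst ha
        refine ⟨(l, w'), (ih _).mpr ⟨hL, h2⟩, ?_⟩
        rw [mem_cstep]
        left
        simp [List.concat_eq_append]

lemma cstep_nodup (a : α) (x : List (List α) × List α) : (cstep M a x).Nodup := by
  unfold cstep
  split_ifs with h
  · refine List.nodup_cons.mpr ⟨?_, by simp⟩
    simp only [List.mem_singleton]
    intro hcontra
    have := congrArg Prod.snd hcontra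
    simp at this
  · simp

lemma cstep_disjoint (a : α) {x y : List (List α) × List α} (hxy : x ≠ y) :
    List.Disjoint (cstep M a x) (cstep M a y) := by
  intro z hzx hzy
  rcases (mem_cstep M).mp hzx with rfl | ⟨_, rfl⟩ <;>
    rcases (mem_cstep M).mp hzy with h2 | ⟨_, h2⟩
  · apply hxy
    have h1 := congrArg Prod.fst h2
    have h3 := congrArg Prod.snd h2
    simp only at h1 h3
    obtain ⟨l, w⟩ := x; obtain ⟨l', w'⟩ := y
    simp only at h1 h3
    obtain ⟨h4, -⟩ := List.append_inj' h3 rfl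
    simp [h1, h4]
  · have := congrArg Prod.snd h2
    simp at this
  · have := congrArg Prod.snd h2
    simp at this
  · apply hxy
    have h1 := congrArg Prod.fst h2
    simp only at h1
    obtain ⟨h4, h5⟩ := List.append_inj' h1 rfl
    obtain ⟨h6, -⟩ := List.append_inj' (by simpa using h5 : x.2 ++ [a] = y.2 ++ [a]) rfl
    obtain ⟨l, w⟩ := x; obtain ⟨l', w'⟩ := y
    simp_all

lemma configs_nodup (u : List α) : (configs M u).Nodup := by
  induction u using List.reverseRecOn with
  | nil => simp
  | append_singleton u a ih =>
    rw [configs_append]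
    rw [List.nodup_flatMap]
    exact ⟨fun x _ => cstep_nodup M a x, ih.imp fun hxy => cstep_disjoint M a hxy⟩

section Counting

variable {β γ : Type*}

lemma bool_eq_of_iff {a b : Bool} (h : a = true ↔ b = true) : a = b := by
  cases a <;> cases b <;> simp_all

lemma length_filter_congr' {p q : β → Bool} (l : List β)
    (h : ∀ x ∈ l, (p x = true ↔ q x = true)) :
    (l.filter p).length = (l.filter q).length := by
  rw [List.filter_congr (fun x hx => bool_eq_of_iff (h x hx))]

lemma length_filter_split (p c : β → Bool) (l : List β) :
    (l.filter p).length
      = (l.filter fun x => p x && c x).length + (l.filter fun x => p x && !c x).length := by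
  induction l with
  | nil => simp
  | cons a l ih =>
    simp only [List.filter_cons]
    cases hp : p a <;> cases hc : c a <;>
      simp [hp, hc, List.length_cons, ih] <;> omega

lemma length_filter_sum {Q : Type} [Fintype Q] (f : β → Q) (p : β → Bool) (l : List β) :
    (l.filter p).length = ∑ q : Q, (l.filter fun x => p x && decide (f x = q)).length := by
  induction l with
  | nil => simp
  | cons a l ih =>
    cases hp : p a with
    | false => simp [List.filter_cons, hp, ih]
    | true =>
      have hterm : ∀ q : Q, ((a :: l).filter fun x => p x && decide (f x = q)).length
          = (l.filter fun x => p x && decide (f x = q)).length + (if f a = q then 1 else 0) := by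
        intro q
        simp only [List.filter_cons, hp]
        by_cases hq : f a = q <;> simp [hq]
      rw [show (∑ q : Q, ((a :: l).filter fun x => p x && decide (f x = q)).length)
          = ∑ q : Q, ((l.filter fun x => p x && decide (f x = q)).length
              + (if f a = q then 1 else 0)) from Finset.sum_congr rfl (fun q _ => hterm q)]
      rw [Finset.sum_add_distrib, ← ih, Finset.sum_ite_eq, List.filter_cons]
      simp [hp]

lemma sum_map_ite (c : β → Bool) (l : List β) :
    (l.map fun x => if c x then 1 else 0).sum = (l.filter c).length := by
  induction l with
  | nil => rfl
  | cons a l ih =>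
    simp only [List.map_cons, List.sum_cons, List.filter_cons]
    cases h : c a <;> simp [h, ih] <;> omega

lemma length_filter_flatMap (l : List β) (f : β → List γ) (p : γ → Bool) :
    ((l.flatMap f).filter p).length
      = (l.map fun x => ((f x).filter p).length).sum := by
  rw [List.filter_flatMap, List.length_flatMap]

end Counting

noncomputable def cN (u : List α) : ℕ :=
  ((configs M u).filter fun x => decide (x.2 = ([] : List α))).length

noncomputable def oN (u : List α) (q : Q) : ℕ :=
  ((configs M u).filter fun x => !decide (x.2 = ([] : List α)) && decide (M.eval x.2 = q)).length

@[simp] lemma cN_nil : cN M [] = 1 := by simp [cN]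

@[simp] lemma oN_nil (q : Q) : oN M [] q = 0 := by simp [oN]

lemma cstep_count_open (a : α) (x : List (List α) × List α) (q' : Q) :
    ((cstep M a x).filter fun y =>
        !decide (y.2 = ([] : List α)) && decide (M.eval y.2 = q')).length
      = if M.step (M.eval x.2) a = q' then 1 else 0 := by
  unfold cstep
  split_ifs with h hq hq <;>
    simp_all [List.filter_cons, DFA.eval_append_singleton]

lemma cstep_count_closed (a : α) (x : List (List α) × List α) :
    ((cstep M a x).filter fun y => decide (y.2 = ([] : List α))).length
      = if M.step (M.eval x.2) a ∈ M.accept then 1 else 0 := by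
  unfold cstep
  simp only [DFA.eval_append_singleton]
  split_ifs with h <;> simp [List.filter_cons, h]

lemma oN_append_aux (u : List α) (a : α) (q' : Q) :
    oN M (u ++ [a]) q'
      = ((configs M u).filter fun x => decide (M.step (M.eval x.2) a = q')).length := by
  unfold oN
  rw [configs_append, length_filter_flatMap,
    List.map_congr_left (fun x _ => cstep_count_open M a x q')]
  rw [show (fun x : List (List α) × List α => if M.step (M.eval x.2) a = q' then 1 else 0)
      = (fun x : List (List α) × List α =>
          if decide (M.step (M.eval x.2) a = q') then 1 else 0) from ?_]
  · rw [sum_map_ite]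
  · funext x
    by_cases h : M.step (M.eval x.2) a = q' <;> simp [h]

lemma cN_append_aux (u : List α) (a : α) :
    cN M (u ++ [a])
      = ((configs M u).filter fun x => decide (M.step (M.eval x.2) a ∈ M.accept)).length := by
  unfold cN
  rw [configs_append, length_filter_flatMap,
    List.map_congr_left (fun x _ => cstep_count_closed M a x)]
  rw [show (fun x : List (List α) × List α => if M.step (M.eval x.2) a ∈ M.accept then 1 else 0)
      = (fun x : List (List α) × List α =>
          if decide (M.step (M.eval x.2) a ∈ M.accept) then 1 else 0) from ?_]
  · rw [sum_map_ite]
  · funext x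
    by_cases h : M.step (M.eval x.2) a ∈ M.accept <;> simp [h]

lemma oN_append [Fintype Q] (u : List α) (a : α) (q' : Q) :
    oN M (u ++ [a]) q' = (if M.step M.start a = q' then cN M u else 0)
      + ∑ q, if M.step q a = q' then oN M u q else 0 := by
  rw [oN_append_aux,
    length_filter_split (fun x => decide (M.step (M.eval x.2) a = q'))
      (fun x => decide (x.2 = ([] : List α))) (configs M u)]
  congr 1
  · by_cases h : M.step M.start a = q'
    · rw [if_pos h]
      unfold cN
      apply length_filter_congr'
      intro x hx
      simp only [Bool.and_eq_true, decide_eq_true_eq]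
      constructor
      · rintro ⟨-, h2⟩; exact h2
      · intro h2
        refine ⟨?_, h2⟩
        rw [h2]
        simpa using h
    · rw [if_neg h]
      rw [List.filter_eq_nil_iff.mpr ?_]
      · rfl
      · intro x hx
        simp only [Bool.and_eq_true, decide_eq_true_eq, not_and]
        intro h1 h2
        apply h
        rw [h2] at h1
        simpa using h1
  · rw [length_filter_sum (fun x => M.eval x.2)]
    apply Finset.sum_congr rfl
    intro q _
    by_cases h : M.step q a = q'
    · rw [if_pos h]
      unfold oN
      apply length_filter_congr'
      intro x hx
      simp only [Bool.and_eq_true, Bool.not_eq_true', decide_eq_true_eq,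
        decide_eq_false_iff_not]
      constructor
      · rintro ⟨⟨-, h2⟩, h3⟩; exact ⟨h2, h3⟩
      · rintro ⟨h2, h3⟩; exact ⟨⟨by rw [h3, h], h2⟩, h3⟩
    · rw [if_neg h]
      rw [List.filter_eq_nil_iff.mpr ?_]
      · rfl
      · intro x hx
        simp only [Bool.and_eq_true, Bool.not_eq_true', decide_eq_true_eq,
          decide_eq_false_iff_not, not_and]
        rintro ⟨h1, -⟩ h3
        apply h
        rw [← h3, h1]

lemma cN_append [Fintype Q] (u : List α) (a : α) :
    cN M (u ++ [a]) = ∑ q, if q ∈ M.accept then oN M (u ++ [a]) q else 0 := by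
  rw [cN_append_aux,
    length_filter_sum (fun x => M.step (M.eval x.2) a)]
  apply Finset.sum_congr rfl
  intro q _
  by_cases h : q ∈ M.accept
  · rw [if_pos h, oN_append_aux]
    apply length_filter_congr'
    intro x hx
    simp only [Bool.and_eq_true, decide_eq_true_eq]
    constructor
    · rintro ⟨-, h2⟩; exact h2
    · intro h2; exact ⟨h2 ▸ h, h2⟩
  · rw [if_neg h]
    rw [List.filter_eq_nil_iff.mpr ?_]
    · rfl
    · intro x hx
      simp only [Bool.and_eq_true, decide_eq_true_eq, not_and]
      intro h1 h2
      rw [h2] at h1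
      exact h h1

lemma filter_length_eq_one_iff {β : Type*} {l : List β} (h : l.Nodup) (p : β → Bool) :
    (l.filter p).length = 1 ↔ ∃! x, x ∈ l ∧ p x = true := by
  rw [List.length_eq_one_iff]
  constructor
  · rintro ⟨a, ha⟩
    have haf : a ∈ l.filter p := by rw [ha]; simp
    rw [List.mem_filter] at haf
    refine ⟨a, haf, ?_⟩
    rintro y ⟨hyl, hyp⟩
    have : y ∈ l.filter p := List.mem_filter.mpr ⟨hyl, hyp⟩
    rw [ha] at this
    simpa using this
  · rintro ⟨a, ⟨hal, hap⟩, huniq⟩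
    refine ⟨a, ?_⟩
    have haf : a ∈ l.filter p := List.mem_filter.mpr ⟨hal, hap⟩
    have hnd : (l.filter p).Nodup := h.filter p
    have hall : ∀ y ∈ l.filter p, y = a := by
      intro y hy; rw [List.mem_filter] at hy; exact huniq y hy
    rcases hl : l.filter p with _ | ⟨b, t⟩
    · rw [hl] at haf; simp at haf
    · rw [hl] at hall hnd
      have hb : b = a := hall b (by simp)
      subst hb
      have ht : t = [] := by
        rw [List.eq_nil_iff_forall_not_mem]
        intro y hy
        have h1 := hall y (by simp [hy])
        subst h1
        exact (List.nodup_cons.mp hnd).1 hy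
      rw [ht]

lemma cN_eq_one_iff (hε : M.start ∉ M.accept) (u : List α) :
    cN M u = 1 ↔
      ∃! l : List (List α), (∀ v ∈ l, M.eval v ∈ M.accept) ∧ l.flatten = u := by
  unfold cN
  rw [filter_length_eq_one_iff (configs_nodup M u)]
  constructor
  · rintro ⟨x, ⟨hx, hx2⟩, hu⟩
    simp only [decide_eq_true_eq] at hx2
    obtain ⟨hxL, hxflat⟩ := (mem_configs M hε u x).mp hx
    refine ⟨x.1, ⟨hxL, by rw [← hxflat, hx2, List.append_nil]⟩, ?_⟩
    rintro l ⟨hl, hlf⟩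
    have hmem : (l, ([] : List α)) ∈ configs M u :=
      (mem_configs M hε u _).mpr ⟨hl, by simp [hlf]⟩
    have := hu (l, []) ⟨hmem, by simp⟩
    exact congrArg Prod.fst this
  · rintro ⟨l, ⟨hl, hlf⟩, hu⟩
    refine ⟨(l, []), ⟨(mem_configs M hε u _).mpr ⟨hl, by simp [hlf]⟩, by simp⟩, ?_⟩
    rintro y ⟨hy, hy2⟩
    simp only [decide_eq_true_eq] at hy2
    obtain ⟨hyL, hyflat⟩ := (mem_configs M hε u y).mp hy
    have h1 : y.1 = l := hu y.1 ⟨hyL, by rw [← hyflat, hy2, List.append_nil]⟩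
    obtain ⟨y1, y2⟩ := y
    simp_all

def m2 (n : ℕ) : ℕ := min n 2

lemma m2_add (a b : ℕ) : m2 (a + b) = m2 (m2 a + m2 b) := by unfold m2; omega

lemma m2_m2 (a : ℕ) : m2 (m2 a) = m2 a := by unfold m2; omega

lemma m2_sum_congr {Q : Type} {f g : Q → ℕ} (h : ∀ q, m2 (f q) = m2 (g q)) (s : Finset Q) :
    m2 (∑ q ∈ s, f q) = m2 (∑ q ∈ s, g q) := by
  classical
  induction s using Finset.induction_on with
  | empty => simp
  | @insert a s ha ih =>
    rw [Finset.sum_insert ha, Finset.sum_insert ha, m2_add, h a, ih, ← m2_add]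

def c2 (n : ℕ) : Fin 3 := ⟨m2 n, by unfold m2; omega⟩

lemma c2_val (n : ℕ) : ((c2 n : Fin 3) : ℕ) = m2 n := rfl

lemma c2_eq_iff {a b : ℕ} : c2 a = c2 b ↔ m2 a = m2 b := by
  unfold c2
  simp [Fin.ext_iff]

noncomputable def ostep [Fintype Q] (s : (Q → Fin 3) × Fin 3) (a : α) (q' : Q) : Fin 3 :=
  c2 ((if M.step M.start a = q' then (s.2 : ℕ) else 0)
    + ∑ q, if M.step q a = q' then ((s.1 q : ℕ)) else 0)

noncomputable def countDFA [Fintype Q] : DFA α ((Q → Fin 3) × Fin 3) where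
  step := fun s a =>
    (ostep M s a, c2 (∑ q, if q ∈ M.accept then ((ostep M s a q : ℕ)) else 0))
  start := (fun _ => c2 0, c2 1)
  accept := {s | s.2 = c2 1}

lemma countDFA_eval [Fintype Q] (u : List α) :
    (countDFA M).eval u = (fun q => c2 (oN M u q), c2 (cN M u)) := by
  induction u using List.reverseRecOn with
  | nil =>
    show (countDFA M).start = _
    refine Prod.ext ?_ ?_ <;> simp [countDFA]
  | append_singleton u a ih =>
    rw [DFA.eval_append_singleton, ih]
    have hopen : ∀ q', ostep M (fun q => c2 (oN M u q), c2 (cN M u)) a q'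
        = c2 (oN M (u ++ [a]) q') := by
      intro q'
      unfold ostep
      rw [oN_append M u a q', c2_eq_iff]
      have h1 : m2 (if M.step M.start a = q' then ((c2 (cN M u) : ℕ)) else 0)
          = m2 (if M.step M.start a = q' then cN M u else 0) := by
        split_ifs <;> simp [c2_val, m2_m2]
      have h2 : m2 (∑ q, if M.step q a = q' then ((c2 (oN M u q) : ℕ)) else 0)
          = m2 (∑ q, if M.step q a = q' then oN M u q else 0) :=
        m2_sum_congr (fun q => by split_ifs <;> simp [c2_val, m2_m2]) _
      rw [m2_add, h1, h2, ← m2_add]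
    show ((countDFA M).step _ a) = _
    unfold countDFA
    simp only
    refine Prod.ext ?_ ?_
    · funext q'
      exact hopen q'
    · simp only
      rw [cN_append M u a, c2_eq_iff]
      refine m2_sum_congr (fun q => ?_) _
      split_ifs
      · rw [hopen q, c2_val, m2_m2]
      · rfl

lemma countDFA_accepts [Fintype Q] (u : List α) :
    u ∈ (countDFA M).accepts ↔ cN M u = 1 := by
  rw [DFA.mem_accepts]
  have : ((countDFA M).eval u ∈ (countDFA M).accept) ↔ ((countDFA M).eval u).2 = c2 1 :=
    Iff.rfl
  rw [this, countDFA_eval]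
  simp only
  rw [c2_eq_iff]
  unfold m2
  omega

end UDS

/-- `L^#`: the set of words `u` admitting exactly one factorization into a
concatenation of factors from `L`, i.e. there is exactly one list of words,
all belonging to `L`, whose concatenation equals `u`. -/
def UniqueDecompStar {α : Type} (L : Language α) : Language α :=
  {u | ∃! l : List (List α), (∀ v ∈ l, v ∈ L) ∧ l.flatten = u}

theorem uniqueDecompStar_isRegular
    {α : Type} [Fintype α] (L : Language α) (h : L.IsRegular) :
    (UniqueDecompStar L).IsRegular := by
  obtain ⟨Q, fQ, M, hM⟩ := h
  haveI := fQ
  by_cases hε : ([] : List α) ∈ L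
  · -- `[] ∈ L`: no word has a unique factorization
    refine ⟨Unit, inferInstance, ⟨fun _ _ => (), (), ∅⟩, ?_⟩
    ext u
    simp only [DFA.mem_accepts]
    constructor
    · intro h1
      exact absurd h1 (Set.notMem_empty _)
    · rintro ⟨l, ⟨hl, hlf⟩, hu⟩
      exfalso
      have h1 := hu (l ++ [[]]) ⟨?_, ?_⟩
      · have h2 := congrArg List.length h1
        simp at h2
      · intro v hv
        rcases List.mem_append.mp hv with h2 | h2
        · exact hl v h2
        · simp only [List.mem_singleton] at h2
          subst h2
          exact hε
      · simp [hlf]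
  · -- `[] ∉ L`: use the capped counting DFA
    have hε' : M.start ∉ M.accept := by
      intro hc
      apply hε
      rw [← hM, DFA.mem_accepts]
      simpa using hc
    refine ⟨(Q → Fin 3) × Fin 3, inferInstance, UDS.countDFA M, ?_⟩
    ext u
    rw [UDS.countDFA_accepts, UDS.cN_eq_one_iff M hε' u]
    have hmem : ∀ v : List α, (M.eval v ∈ M.accept) ↔ v ∈ L := by
      intro v
      rw [← hM, DFA.mem_accepts]
    simp only [UniqueDecompStar, Set.mem_setOf_eq]
    exact existsUnique_congr fun l =>
      and_congr_left fun _ => forall₂_congr fun v _ => hmem v
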